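/- Let (Ω,d) be a metric space satisfying Condition 2: for all x,y ∈ Ω and r,s > 0, if the open balls B_r(x) and B_s(y) are disjoint then d(x,y) ≥ r + s. Then for every x ∈ Ω and r > 0, the closure of the open ball B_r(x) equals the closed ball B_r[x] = {y ∈ Ω | d(x,y) ≤ r}. -/

import Mathlib

open Metric

/-- Under Condition 2 the closure of an open ball is the closed ball. -/
theorem closure_ball_eq_closedBall_of_cond2
    {Ω : Type*} [MetricSpace Ω]
    (cond2 : ∀ x y : Ω, ∀ r s : ℝ, 0 < r → 0 < s →
      Metric.ball x r ∩ Metric.ball y s = ∅ → r + s ≤ dist x y)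
    (x : Ω) (r : ℝ) (hr : 0 < r) :
    closure (Metric.ball x r) = Metric.closedBall x r := by
  apply Set.Subset.antisymm
  · simpa using closure_minimal ball_subset_closedBall isClosed_closedBall
  · intro y hy
    rw [Metric.mem_closure_iff]
    intro ε hε
    by_contra h
    push_neg at h
    have hdisj : Metric.ball x r ∩ Metric.ball y ε = ∅ := by
      ext z
      simp only [Set.mem_inter_iff, Metric.mem_ball, Set.mem_empty_iff_false, iff_false]
      rintro ⟨hz1, hz2⟩
      exact absurd (dist_comm z y ▸ hz2) (not_lt.2 (h z (Metric.mem_ball.2 hz1)))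
    have := cond2 x y r ε hr hε hdisj
    have hyx : dist x y ≤ r := by rw [dist_comm]; exact Metric.mem_closedBall.1 hy
    linarith
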